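/- Under Assumption 1, for any fixed (E,T), if (Q̂,q̂) is the unique solution of the rational-inattention problem, P is its generated SDSC function, and a ∈ A is an alternative chosen with probability 1 at the posterior γ^a ∈ supp Q̂ (so P(a) > 0), then the optimal posterior is recovered from the SDSC data by Bayes' rule: γ^a(ω) = P(a|ω)μ(ω)/P(a) for every ω ∈ Ω. -/

import Mathlib

open scoped BigOperators ENNReal

noncomputable section

/-- A feasible posterior-based policy `(Q, q) ∈ Λ`: a finitely supported
Bayes-consistent attention allocation `Q` over posteriors in the simplex
`Δ(Ω)`, together with a stochastic choice function `q` mapping each supported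
posterior to a probability distribution over alternatives. -/
structure Policy (Ω A : Type*) [Fintype Ω] [Fintype A] (μ : Ω → ℝ) where
  supp : Finset (Ω → ℝ)
  Q : (Ω → ℝ) → ℝ
  Q_nonneg : ∀ γ, 0 ≤ Q γ
  supp_iff : ∀ γ, γ ∈ supp ↔ Q γ ≠ 0
  mem_simplex : ∀ γ ∈ supp, γ ∈ stdSimplex ℝ Ω
  Q_total : ∑ γ ∈ supp, Q γ = 1
  bayes : ∀ ω, ∑ γ ∈ supp, Q γ * γ ω = μ ω
  q : (Ω → ℝ) → A → ℝ
  q_mem : ∀ γ ∈ supp, q γ ∈ stdSimplex ℝ A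

variable {Ω A : Type*} [Fintype Ω] [Fintype A]

/-- Expected value `γ ⬝ v` of a vector `v : ℝ^Ω` under a belief `γ`. -/
def dotR (γ v : Ω → ℝ) : ℝ := ∑ ω, γ ω * v ω

/-- Net expected utility `N^a(γ) = γ·u_a + E(a) − T(γ)` of alternative `a`
at posterior `γ`, valued in the extended reals (`E` takes values in
`ℝ ∪ {−∞}` and `T` in `[0, ∞]`). -/
def Na (u : A → Ω → ℝ) (E : A → EReal) (T : (Ω → ℝ) → EReal) (a : A) (γ : Ω → ℝ) : EReal :=
  ((dotR γ (u a) : ℝ) : EReal) + E a - T γ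

/-- Value of a posterior: `N(γ) = max_a N^a(γ)`. -/
def Nval (u : A → Ω → ℝ) (E : A → EReal) (T : (Ω → ℝ) → EReal) (γ : Ω → ℝ) : EReal :=
  ⨆ a : A, Na u E T a γ

/-- Objective of the rational-inattention problem:
`Σ_{γ ∈ supp Q} Σ_{a ∈ A} Q(γ) q(a|γ) (γ·u_a + E(a) − T(γ))`. -/
def objective (u : A → Ω → ℝ) (E : A → EReal) (T : (Ω → ℝ) → EReal)
    {μ : Ω → ℝ} (π : Policy Ω A μ) : EReal :=
  ∑ γ ∈ π.supp, ∑ a : A, ((π.Q γ * π.q γ a : ℝ) : EReal) * Na u E T a γ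

/-- `π` maximizes the rational-inattention problem over `Λ`. -/
def RIMax (u : A → Ω → ℝ) (E : A → EReal) (T : (Ω → ℝ) → EReal)
    {μ : Ω → ℝ} (π : Policy Ω A μ) : Prop :=
  ∀ π' : Policy Ω A μ, objective u E T π' ≤ objective u E T π

/-- `Γ(θ)`: the set of posteriors maximizing `N(γ) − θ·γ` over the simplex. -/
def Gamma (u : A → Ω → ℝ) (E : A → EReal) (T : (Ω → ℝ) → EReal) (θ : Ω → ℝ) :
    Set (Ω → ℝ) :=
  {γ | γ ∈ stdSimplex ℝ Ω ∧ ∀ γ' ∈ stdSimplex ℝ Ω,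
    Nval u E T γ' - ((dotR γ' θ : ℝ) : EReal) ≤ Nval u E T γ - ((dotR γ θ : ℝ) : EReal)}

/-- Assumption 1 (parts (ii)–(iv)): `E(a) ≠ −∞` for some `a` (and `E` is
`ℝ ∪ {−∞}`-valued); `T ≥ 0` is strictly convex with `T(μ) = 0`; for every
direction `θ` the set `Γ(θ)` is linearly independent; and for distinct
alternatives the utility difference `u_a − u_b` is not constant across states. -/
def Assumption1 (μ : Ω → ℝ) (u : A → Ω → ℝ) (E : A → EReal) (T : (Ω → ℝ) → EReal) : Prop :=
  (∀ a, E a ≠ ⊤) ∧ (∃ a, E a ≠ ⊥) ∧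
  (∀ γ, 0 ≤ T γ) ∧ (T μ = 0) ∧
  (∀ γ₁ ∈ stdSimplex ℝ Ω, ∀ γ₂ ∈ stdSimplex ℝ Ω, γ₁ ≠ γ₂ →
    ∀ t : ℝ, 0 < t → t < 1 →
      T (t • γ₁ + (1 - t) • γ₂) < (t : EReal) * T γ₁ + ((1 - t : ℝ) : EReal) * T γ₂) ∧
  (∀ θ : Ω → ℝ, LinearIndependent ℝ (fun γ : Gamma u E T θ => (γ : Ω → ℝ))) ∧
  (∀ a b : A, a ≠ b → ¬ ∃ c : ℝ, ∀ ω, u a ω - u b ω = c)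

/-- The state-dependent stochastic choice function generated by a policy:
`P(a|ω) = μ(ω)⁻¹ Σ_{γ ∈ supp Q} Q(γ) q(a|γ) γ(ω)`. -/
def genP (μ : Ω → ℝ) (π : Policy Ω A μ) (a : A) (ω : Ω) : ℝ :=
  (μ ω)⁻¹ * ∑ γ ∈ π.supp, π.Q γ * π.q γ a * γ ω

/-- Unconditional choice probability generated by a policy:
`P(a) = Σ_{γ ∈ supp Q} Q(γ) q(a|γ)`. -/
def genProb (μ : Ω → ℝ) (π : Policy Ω A μ) (a : A) : ℝ :=
  ∑ γ ∈ π.supp, π.Q γ * π.q γ a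

-- AUX START
set_option linter.unusedSectionVars false
namespace Stmt3Aux

attribute [local instance] Classical.propDecidable

lemma sum_ereal_ne_top {ι : Type*} {s : Finset ι} {f : ι → EReal}
    (h : ∀ i ∈ s, f i ≠ ⊤) : ∑ i ∈ s, f i ≠ ⊤ := by
  classical
  induction s using Finset.induction_on with
  | empty => simp
  | @insert a s ha ih =>
      rw [Finset.sum_insert ha]
      exact (EReal.add_lt_top (h a (Finset.mem_insert_self a s))
        (ih fun i hi => h i (Finset.mem_insert_of_mem hi))).ne

lemma sum_ereal_eq_bot {ι : Type*} {s : Finset ι} {f : ι → EReal}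
    {i : ι} (hi : i ∈ s) (hb : f i = ⊥) : ∑ j ∈ s, f j = ⊥ := by
  classical
  rw [← Finset.add_sum_erase s f hi, hb, EReal.bot_add]

lemma term_repr {c : ℝ} (hc : 0 ≤ c) {x : EReal} (hx : x ≠ ⊤) (hb : c ≠ 0 → x ≠ ⊥) :
    (c : EReal) * x = ((c * x.toReal : ℝ) : EReal) := by
  rcases eq_or_lt_of_le hc with h | h
  · simp [← h]
  · conv_lhs => rw [← EReal.coe_toReal hx (hb h.ne')]
    rw [← EReal.coe_mul]

lemma term_ne_top {c : ℝ} (hc : 0 ≤ c) {x : EReal} (hx : x ≠ ⊤) : (c : EReal) * x ≠ ⊤ := by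
  rcases eq_or_lt_of_le hc with h | h
  · simp [← h]
  · by_cases hbx : x = ⊥
    · rw [hbx, EReal.coe_mul_bot_of_pos h]; exact bot_ne_top
    · rw [← EReal.coe_toReal hx hbx, ← EReal.coe_mul]; exact EReal.coe_ne_top _

lemma Na_ne_top {u : A → Ω → ℝ} {E : A → EReal} {T : (Ω → ℝ) → EReal}
    (hE : ∀ b, E b ≠ ⊤) (hT : ∀ γ, 0 ≤ T γ) (b : A) (γ : Ω → ℝ) :
    Na u E T b γ ≠ ⊤ := by
  unfold Na
  rw [sub_eq_add_neg]
  refine (EReal.add_lt_top ?_ ?_).ne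
  · exact (EReal.add_lt_top (EReal.coe_ne_top _) (hE b)).ne
  · rw [Ne, EReal.neg_eq_top_iff]
    intro h
    exact absurd (h ▸ hT γ) (by simp)

lemma Na_eq_bot_of_E {u : A → Ω → ℝ} {E : A → EReal} {T : (Ω → ℝ) → EReal}
    {b : A} {γ : Ω → ℝ} (hEb : E b = ⊥) : Na u E T b γ = ⊥ := by
  unfold Na
  rw [hEb, EReal.add_bot, EReal.bot_sub]

lemma Na_eq_bot_of_T {u : A → Ω → ℝ} {E : A → EReal} {T : (Ω → ℝ) → EReal}
    {b : A} {γ : Ω → ℝ} (hT : T γ = ⊤) : Na u E T b γ = ⊥ := by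
  unfold Na
  rw [hT, EReal.sub_top]

lemma Na_finite {u : A → Ω → ℝ} {E : A → EReal} {T : (Ω → ℝ) → EReal}
    {b : A} {γ : Ω → ℝ} (hEtop : E b ≠ ⊤) (hT0 : ∀ γ, 0 ≤ T γ)
    (hne : Na u E T b γ ≠ ⊥) :
    ∃ e tt : ℝ, E b = (e : EReal) ∧ T γ = (tt : EReal) ∧
      Na u E T b γ = ((dotR γ (u b) + e - tt : ℝ) : EReal) := by
  have hEb : E b ≠ ⊥ := fun h => hne (Na_eq_bot_of_E h)
  have hTt : T γ ≠ ⊤ := fun h => hne (Na_eq_bot_of_T h)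
  have hTb : T γ ≠ ⊥ := fun h => absurd (h ▸ hT0 γ) (by simp)
  refine ⟨(E b).toReal, (T γ).toReal, (EReal.coe_toReal hEtop hEb).symm,
    (EReal.coe_toReal hTt hTb).symm, ?_⟩
  unfold Na
  conv_lhs => rw [← EReal.coe_toReal hEtop hEb, ← EReal.coe_toReal hTt hTb]
  rw [← EReal.coe_add, ← EReal.coe_sub]

lemma dotR_comb (t : ℝ) (γ1 γ2 v : Ω → ℝ) :
    dotR (t • γ1 + (1 - t) • γ2) v = t * dotR γ1 v + (1 - t) * dotR γ2 v := by
  unfold dotR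
  rw [Finset.mul_sum, Finset.mul_sum, ← Finset.sum_add_distrib]
  refine Finset.sum_congr rfl fun ω _ => ?_
  simp only [Pi.add_apply, Pi.smul_apply, smul_eq_mul]
  ring

lemma comb_ne_left {t : ℝ} (ht : t < 1) {γ1 γ2 : Ω → ℝ} (hne : γ1 ≠ γ2) :
    t • γ1 + (1 - t) • γ2 ≠ γ1 := by
  intro h
  apply hne
  funext ω
  have h1 := congrFun h ω
  simp only [Pi.add_apply, Pi.smul_apply, smul_eq_mul] at h1
  have h2 : (1 - t) * (γ2 ω - γ1 ω) = 0 := by linarith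
  rcases mul_eq_zero.1 h2 with h3 | h3
  · linarith
  · linarith

lemma comb_ne_right {t : ℝ} (ht : 0 < t) {γ1 γ2 : Ω → ℝ} (hne : γ1 ≠ γ2) :
    t • γ1 + (1 - t) • γ2 ≠ γ2 := by
  intro h
  apply hne
  funext ω
  have h1 := congrFun h ω
  simp only [Pi.add_apply, Pi.smul_apply, smul_eq_mul] at h1
  have h2 : t * (γ1 ω - γ2 ω) = 0 := by linarith
  rcases mul_eq_zero.1 h2 with h3 | h3
  · linarith
  · linarith

lemma delta_of_one {f : A → ℝ} (hmem : f ∈ stdSimplex ℝ A) {a : A} (hfa : f a = 1)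
    {b : A} (hb : b ≠ a) : f b = 0 := by
  have hsum := hmem.2
  have h1 : ∑ x ∈ Finset.univ.erase a, f x = 0 := by
    rw [Finset.sum_erase_eq_sub (Finset.mem_univ a), hmem.2, hfa]
    ring
  have := (Finset.sum_eq_zero_iff_of_nonneg
    (fun x _ => hmem.1 x)).1 h1 b (Finset.mem_erase.2 ⟨hb, Finset.mem_univ b⟩)
  exact this


lemma coe_sum {ι : Type*} (s : Finset ι) (f : ι → ℝ) :
    ((∑ i ∈ s, f i : ℝ) : EReal) = ∑ i ∈ s, ((f i : ℝ) : EReal) :=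
  map_sum (⟨⟨Real.toEReal, EReal.coe_zero⟩, EReal.coe_add⟩ : ℝ →+ EReal) f s

set_option maxHeartbeats 2000000 in
lemma improve {μ : Ω → ℝ} (u : A → Ω → ℝ) (E : A → EReal) (T : (Ω → ℝ) → EReal)
    (hEtop : ∀ b, E b ≠ ⊤) (hT0 : ∀ γ, 0 ≤ T γ)
    (hconv : ∀ γ₁ ∈ stdSimplex ℝ Ω, ∀ γ₂ ∈ stdSimplex ℝ Ω, γ₁ ≠ γ₂ →
      ∀ t : ℝ, 0 < t → t < 1 →
        T (t • γ₁ + (1 - t) • γ₂) < (t : EReal) * T γ₁ + ((1 - t : ℝ) : EReal) * T γ₂)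
    (π : Policy Ω A μ) (hbot : objective u E T π ≠ ⊥)
    (a : A) (γ1 γ2 : Ω → ℝ) (h1 : γ1 ∈ π.supp) (h2 : γ2 ∈ π.supp) (hne : γ1 ≠ γ2)
    (hq1 : π.q γ1 a = 1) (hq2 : π.q γ2 a ≠ 0) :
    ∃ π' : Policy Ω A μ, objective u E T π < objective u E T π' := by
  classical
  have hQ1 : 0 < π.Q γ1 := lt_of_le_of_ne (π.Q_nonneg γ1) (Ne.symm ((π.supp_iff γ1).1 h1))
  have hQ2 : 0 < π.Q γ2 := lt_of_le_of_ne (π.Q_nonneg γ2) (Ne.symm ((π.supp_iff γ2).1 h2))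
  set s : ℝ := π.q γ2 a with hs_def
  have hs0 : 0 < s := lt_of_le_of_ne ((π.q_mem γ2 h2).1 a) (Ne.symm hq2)
  have hs1 : s ≤ 1 := by
    have h := Finset.single_le_sum (f := π.q γ2) (fun b _ => (π.q_mem γ2 h2).1 b)
      (Finset.mem_univ a)
    rw [(π.q_mem γ2 h2).2] at h
    exact h
  set M : ℝ := π.Q γ1 + π.Q γ2 * s with hM_def
  have hM : 0 < M := by
    have h := mul_pos hQ2 hs0
    rw [hM_def]; linarith
  set t : ℝ := π.Q γ1 / M with ht_def
  have ht0 : 0 < t := div_pos hQ1 hM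
  have ht1 : t < 1 := by
    rw [ht_def]
    refine (div_lt_one hM).2 ?_
    have h := mul_pos hQ2 hs0
    rw [hM_def]; linarith
  have htM : t * M = π.Q γ1 := by rw [ht_def]; field_simp
  have ht'M : (1 - t) * M = π.Q γ2 * s := by
    have h := htM
    linarith [hM_def, htM]
  set γs : Ω → ℝ := t • γ1 + (1 - t) • γ2 with hγs_def
  have hsγ1 : γs ≠ γ1 := by rw [hγs_def]; exact comb_ne_left ht1 hne
  have hsγ2 : γs ≠ γ2 := by rw [hγs_def]; exact comb_ne_right ht0 hne
  have hγ1S := π.mem_simplex γ1 h1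
  have hγ2S := π.mem_simplex γ2 h2
  have hγsS : γs ∈ stdSimplex ℝ Ω := by
    rw [hγs_def]
    exact (convex_stdSimplex ℝ Ω) hγ1S hγ2S ht0.le (by linarith) (by ring)
  have hq1b : ∀ b, b ≠ a → π.q γ1 b = 0 := fun b hb => delta_of_one (π.q_mem γ1 h1) hq1 hb
  have hfin : ∀ γ ∈ π.supp, ∀ b : A, π.Q γ * π.q γ b ≠ 0 → Na u E T b γ ≠ ⊥ := by
    intro γ hγ b hc hNa
    apply hbot
    have hcpos : 0 < π.Q γ * π.q γ b :=
      lt_of_le_of_ne (mul_nonneg (π.Q_nonneg γ) ((π.q_mem γ hγ).1 b)) (Ne.symm hc)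
    have hterm : ((π.Q γ * π.q γ b : ℝ) : EReal) * Na u E T b γ = ⊥ := by
      rw [hNa, EReal.coe_mul_bot_of_pos hcpos]
    have hinner : ∑ b' : A, ((π.Q γ * π.q γ b' : ℝ) : EReal) * Na u E T b' γ = ⊥ :=
      sum_ereal_eq_bot (Finset.mem_univ b) hterm
    exact sum_ereal_eq_bot hγ hinner
  have hfin1 : Na u E T a γ1 ≠ ⊥ := by
    refine hfin γ1 h1 a ?_
    rw [hq1, mul_one]; exact hQ1.ne'
  have hfin2 : Na u E T a γ2 ≠ ⊥ := by
    refine hfin γ2 h2 a ?_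
    rw [← hs_def]; exact (mul_pos hQ2 hs0).ne'
  obtain ⟨e, t1, hEa, hT1, hNa1⟩ := Na_finite (hEtop a) hT0 hfin1
  obtain ⟨e', t2, hEa', hT2, hNa2⟩ := Na_finite (hEtop a) hT0 hfin2
  rw [hEa] at hEa'
  have hee : e = e' := by exact_mod_cast hEa'
  subst hee
  have hTsbound := hconv γ1 hγ1S γ2 hγ2S hne t ht0 ht1
  rw [← hγs_def, hT1, hT2, ← EReal.coe_mul, ← EReal.coe_mul, ← EReal.coe_add] at hTsbound
  have hTs_ne_top : T γs ≠ ⊤ := ne_top_of_lt hTsbound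
  have hTs_ne_bot : T γs ≠ ⊥ := fun h => absurd (h ▸ hT0 γs) (by simp)
  set ts : ℝ := (T γs).toReal with hts_def
  have hTs : T γs = (ts : EReal) := (EReal.coe_toReal hTs_ne_top hTs_ne_bot).symm
  have hts_lt : ts < t * t1 + (1 - t) * t2 := by
    rw [hTs] at hTsbound
    exact_mod_cast hTsbound
  have hNas : Na u E T a γs = ((dotR γs (u a) + e - ts : ℝ) : EReal) := by
    unfold Na
    rw [hEa, hTs, ← EReal.coe_add, ← EReal.coe_sub]
  set r : (Ω → ℝ) → A → ℝ := fun γ b => (Na u E T b γ).toReal with hr_def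
  have hr1 : r γ1 a = dotR γ1 (u a) + e - t1 := by
    simp only [hr_def]; rw [hNa1, EReal.toReal_coe]
  have hr2 : r γ2 a = dotR γ2 (u a) + e - t2 := by
    simp only [hr_def]; rw [hNa2, EReal.toReal_coe]
  have hrs : r γs a = dotR γs (u a) + e - ts := by
    simp only [hr_def]; rw [hNas, EReal.toReal_coe]
  have hd : dotR γs (u a) = t * dotR γ1 (u a) + (1 - t) * dotR γ2 (u a) := by
    rw [hγs_def]; exact dotR_comb t γ1 γ2 (u a)
  have hkey : π.Q γ1 * r γ1 a + π.Q γ2 * s * r γ2 a < M * r γs a := by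
    rw [hr1, hr2, hrs, hd, ← htM, ← ht'M]
    nlinarith [mul_pos hM (sub_pos.2 hts_lt)]
  -- the improved policy
  set Q' : (Ω → ℝ) → ℝ := fun γ =>
    if γ = γ1 then 0 else if γ = γ2 then π.Q γ2 * (1 - s)
    else if γ = γs then π.Q γs + M else π.Q γ with hQ'_def
  set q' : (Ω → ℝ) → A → ℝ := fun γ b =>
    if γ = γs then (π.Q γs * π.q γs b + (if b = a then M else 0)) / (π.Q γs + M)
    else if γ = γ2 then (if b = a then (0 : ℝ) else π.q γ2 b / (1 - s))
    else π.q γ b with hq'_def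
  set U : Finset (Ω → ℝ) := insert γs π.supp with hU_def
  set supp' : Finset (Ω → ℝ) := U.filter (fun γ => Q' γ ≠ 0) with hsupp'_def
  have hD : 0 < π.Q γs + M := add_pos_of_nonneg_of_pos (π.Q_nonneg γs) hM
  have hQoff : ∀ γ, γ ∉ π.supp → π.Q γ = 0 := by
    intro γ h
    by_contra hn
    exact h ((π.supp_iff γ).2 hn)
  have hQ'1 : Q' γ1 = 0 := by rw [hQ'_def]; simp
  have hQ'2 : Q' γ2 = π.Q γ2 * (1 - s) := by
    rw [hQ'_def]; simp [Ne.symm hne, Ne.symm hsγ2]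
  have hQ's : Q' γs = π.Q γs + M := by
    rw [hQ'_def]; simp [hsγ1, hsγ2]
  have hQ'o : ∀ γ, γ ≠ γ1 → γ ≠ γ2 → γ ≠ γs → Q' γ = π.Q γ := by
    intro γ ha hb hc
    rw [hQ'_def]; simp [ha, hb, hc]
  have hq's : ∀ b, q' γs b
      = (π.Q γs * π.q γs b + (if b = a then M else 0)) / (π.Q γs + M) := by
    intro b; rw [hq'_def]; simp
  have hq'2 : ∀ b, q' γ2 b = if b = a then (0 : ℝ) else π.q γ2 b / (1 - s) := by
    intro b; rw [hq'_def]; simp [Ne.symm hsγ2]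
  have hq'o : ∀ γ, γ ≠ γs → γ ≠ γ2 → q' γ = π.q γ := by
    intro γ ha hb
    funext b
    rw [hq'_def]; simp [ha, hb]
  have hQ'nonneg : ∀ γ, 0 ≤ Q' γ := by
    intro γ
    rw [hQ'_def]
    try dsimp only
    split_ifs
    · exact le_refl 0
    · exact mul_nonneg (π.Q_nonneg γ2) (by linarith)
    · exact add_nonneg (π.Q_nonneg γs) hM.le
    · exact π.Q_nonneg γ
  have hsupp'iff : ∀ γ, γ ∈ supp' ↔ Q' γ ≠ 0 := by
    intro γ
    rw [hsupp'_def, Finset.mem_filter]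
    constructor
    · exact fun h => h.2
    · intro h
      refine ⟨?_, h⟩
      rw [hU_def, Finset.mem_insert]
      by_contra hU
      push_neg at hU
      obtain ⟨hUs, hUsupp⟩ := hU
      apply h
      have hg1 : γ ≠ γ1 := fun hh => hUsupp (hh ▸ h1)
      have hg2 : γ ≠ γ2 := fun hh => hUsupp (hh ▸ h2)
      rw [hQ'o γ hg1 hg2 hUs]
      exact hQoff γ hUsupp
  have hmem' : ∀ γ ∈ supp', γ ∈ stdSimplex ℝ Ω := by
    intro γ hγ
    rw [hsupp'_def, Finset.mem_filter, hU_def, Finset.mem_insert] at hγ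
    rcases hγ.1 with h | h
    · rw [h]; exact hγsS
    · exact π.mem_simplex γ h
  have hsubU : supp' ⊆ U := by
    rw [hsupp'_def]; exact Finset.filter_subset _ _
  have htriple : ({γ1, γ2, γs} : Finset (Ω → ℝ)) ⊆ U := by
    intro γ hγ
    rw [hU_def]
    simp only [Finset.mem_insert, Finset.mem_singleton] at hγ ⊢
    rcases hγ with h | h | h
    · right; rw [h]; exact h1
    · right; rw [h]; exact h2
    · left; exact h
  have hn1 : γ1 ∉ ({γ2, γs} : Finset (Ω → ℝ)) := by
    simp only [Finset.mem_insert, Finset.mem_singleton]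
    push_neg
    exact ⟨hne, Ne.symm hsγ1⟩
  have hn2 : γ2 ∉ ({γs} : Finset (Ω → ℝ)) := by
    simp only [Finset.mem_singleton]
    exact Ne.symm hsγ2
  have hsum_diff : ∀ F G : (Ω → ℝ) → ℝ, (∀ γ, γ ≠ γ1 → γ ≠ γ2 → γ ≠ γs → F γ = G γ) →
      ∑ γ ∈ U, F γ - ∑ γ ∈ U, G γ
        = (F γ1 - G γ1) + (F γ2 - G γ2) + (F γs - G γs) := by
    intro F G h
    have e1 : ∑ γ ∈ ({γ1, γ2, γs} : Finset (Ω → ℝ)), (F γ - G γ)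
        = ∑ γ ∈ U, (F γ - G γ) :=
      Finset.sum_subset htriple (fun γ _ hγ => by
        simp only [Finset.mem_insert, Finset.mem_singleton] at hγ
        push_neg at hγ
        rw [h γ hγ.1 hγ.2.1 hγ.2.2]; ring)
    rw [← Finset.sum_sub_distrib, ← e1, Finset.sum_insert hn1, Finset.sum_insert hn2,
      Finset.sum_singleton]
    ring
  have hsupp'U : ∀ F : (Ω → ℝ) → ℝ, (∀ γ, Q' γ = 0 → F γ = 0) →
      ∑ γ ∈ supp', F γ = ∑ γ ∈ U, F γ := by
    intro F hF
    refine Finset.sum_subset hsubU (fun γ hγU hγf => ?_)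
    refine hF γ ?_
    by_contra hq0
    exact hγf ((hsupp'iff γ).2 hq0)
  have hUsum : ∀ F : (Ω → ℝ) → ℝ, (π.Q γs = 0 → F γs = 0) →
      ∑ γ ∈ U, F γ = ∑ γ ∈ π.supp, F γ := by
    intro F hF
    rw [hU_def]
    exact Finset.sum_insert_of_eq_zero_if_notMem (fun hns => hF (hQoff γs hns))
  have hQtot : ∑ γ ∈ supp', Q' γ = 1 := by
    rw [hsupp'U Q' (fun γ h => h)]
    have e1 := hsum_diff Q' π.Q hQ'o
    have e2 : ∑ γ ∈ U, π.Q γ = 1 := by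
      rw [hUsum π.Q (fun h => h)]
      exact π.Q_total
    rw [hQ'1, hQ'2, hQ's] at e1
    linarith [e1, e2, hM_def]
  have hbayes : ∀ ω, ∑ γ ∈ supp', Q' γ * γ ω = μ ω := by
    intro ω
    rw [hsupp'U (fun γ => Q' γ * γ ω) (fun γ h => by simp only [h, zero_mul])]
    have e1 := hsum_diff (fun γ => Q' γ * γ ω) (fun γ => π.Q γ * γ ω)
      (fun γ ha hb hc => by simp only [hQ'o γ ha hb hc])
    try dsimp only at e1
    have e2 : ∑ γ ∈ U, π.Q γ * γ ω = μ ω := by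
      rw [hUsum (fun γ => π.Q γ * γ ω) (fun h => by simp only [h, zero_mul])]
      exact π.bayes ω
    rw [hQ'1, hQ'2, hQ's] at e1
    have hγsω : γs ω = t * γ1 ω + (1 - t) * γ2 ω := by
      rw [hγs_def]
      simp [Pi.add_apply, Pi.smul_apply, smul_eq_mul]
    have hΔ : (0 * γ1 ω - π.Q γ1 * γ1 ω) + (π.Q γ2 * (1 - s) * γ2 ω - π.Q γ2 * γ2 ω)
        + ((π.Q γs + M) * γs ω - π.Q γs * γs ω) = 0 := by
      rw [hγsω]
      linear_combination γ1 ω * htM + γ2 ω * ht'M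
    linarith [e1, e2, hΔ]
  have hq'nonneg : ∀ γ ∈ U, ∀ b, 0 ≤ q' γ b := by
    intro γ hγ b
    by_cases hgs : γ = γs
    · rw [hgs, hq's b]
      refine div_nonneg (add_nonneg ?_ ?_) hD.le
      · by_cases hm : γs ∈ π.supp
        · exact mul_nonneg (π.Q_nonneg γs) ((π.q_mem γs hm).1 b)
        · rw [hQoff γs hm, zero_mul]
      · split_ifs
        · exact hM.le
        · exact le_refl 0
    · by_cases hg2 : γ = γ2
      · rw [hg2, hq'2 b]
        split_ifs
        · exact le_refl 0
        · exact div_nonneg ((π.q_mem γ2 h2).1 b) (by linarith)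
      · rw [hq'o γ hgs hg2]
        have hγsupp : γ ∈ π.supp := by
          rw [hU_def, Finset.mem_insert] at hγ
          tauto
        exact (π.q_mem γ hγsupp).1 b
  have hq'sum : ∀ γ ∈ supp', ∑ b : A, q' γ b = 1 := by
    intro γ hγ
    by_cases hgs : γ = γs
    · rw [hgs]
      have e : ∑ b : A, q' γs b
          = (π.Q γs * (∑ b : A, π.q γs b) + M) / (π.Q γs + M) := by
        rw [Finset.sum_congr rfl (fun b _ => hq's b), ← Finset.sum_div]
        congr 1
        rw [Finset.sum_add_distrib, ← Finset.mul_sum]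
        congr 1
        simp
      rw [e]
      by_cases hm : γs ∈ π.supp
      · rw [(π.q_mem γs hm).2, mul_one]
        exact div_self hD.ne'
      · rw [hQoff γs hm]
        simp only [zero_mul, zero_add]
        exact div_self hM.ne'
    · by_cases hg2 : γ = γ2
      · have hQ'γ : Q' γ2 ≠ 0 := by rw [← hg2]; exact (hsupp'iff γ).1 hγ
        rw [hg2]
        rw [hQ'2] at hQ'γ
        have hs1'' : (1 : ℝ) - s ≠ 0 := by
          intro h
          apply hQ'γ
          rw [h, mul_zero]
        have herase : ∑ b ∈ Finset.univ.erase a, π.q γ2 b = 1 - s := by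
          have h := Finset.add_sum_erase Finset.univ (π.q γ2) (Finset.mem_univ a)
          rw [(π.q_mem γ2 h2).2] at h
          rw [hs_def]
          linarith [h]
        rw [← Finset.add_sum_erase Finset.univ (q' γ2) (Finset.mem_univ a), hq'2 a,
          if_pos rfl]
        have e : ∑ b ∈ Finset.univ.erase a, q' γ2 b
            = ∑ b ∈ Finset.univ.erase a, π.q γ2 b / (1 - s) := by
          refine Finset.sum_congr rfl fun b hb => ?_
          rw [hq'2 b, if_neg (Finset.ne_of_mem_erase hb)]
        rw [e, ← Finset.sum_div, herase, zero_add, div_self hs1'']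
      · have hγsupp : γ ∈ π.supp := by
          have h := hsubU hγ
          rw [hU_def, Finset.mem_insert] at h
          tauto
        rw [hq'o γ hgs hg2]
        exact (π.q_mem γ hγsupp).2
  set π' : Policy Ω A μ :=
    { supp := supp', Q := Q', Q_nonneg := hQ'nonneg, supp_iff := hsupp'iff,
      mem_simplex := hmem', Q_total := hQtot, bayes := hbayes, q := q',
      q_mem := fun γ hγ => ⟨hq'nonneg γ (hsubU hγ), hq'sum γ hγ⟩ } with hπ'_def
  refine ⟨π', ?_⟩
  have hfin' : ∀ γ ∈ U, ∀ b : A, Q' γ * q' γ b ≠ 0 → Na u E T b γ ≠ ⊥ := by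
    intro γ hγ b hc
    by_cases hgs : γ = γs
    · rw [hgs] at hc ⊢
      by_cases hba : b = a
      · rw [hba, hNas]
        exact EReal.coe_ne_bot _
      · rw [hQ's, hq's b, if_neg hba, add_zero] at hc
        have hc2 : π.Q γs * π.q γs b ≠ 0 := by
          intro h0
          apply hc
          rw [h0, zero_div, mul_zero]
        have hmem : γs ∈ π.supp := by
          refine (π.supp_iff γs).2 (fun h0 => hc2 ?_)
          rw [h0, zero_mul]
        exact hfin γs hmem b hc2
    · by_cases hg2 : γ = γ2
      · rw [hg2] at hc ⊢
        by_cases hba : b = a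
        · rw [hba]
          exact hfin2
        · rw [hQ'2, hq'2 b, if_neg hba] at hc
          have hc2 : π.Q γ2 * π.q γ2 b ≠ 0 := by
            intro h0
            apply hc
            rcases mul_eq_zero.1 h0 with h | h
            · rw [h, zero_mul, zero_mul]
            · rw [h, zero_div, mul_zero]
          exact hfin γ2 h2 b hc2
      · by_cases hg1 : γ = γ1
        · rw [hg1] at hc
          rw [hQ'1, zero_mul] at hc
          exact absurd rfl hc
        · rw [hQ'o γ hg1 hg2 hgs, hq'o γ hgs hg2] at hc
          have hmem : γ ∈ π.supp := by
            refine (π.supp_iff γ).2 (fun h0 => hc ?_)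
            rw [h0, zero_mul]
          exact hfin γ hmem b hc
  have hrep_old : ∀ γ ∈ U, ∑ b : A, ((π.Q γ * π.q γ b : ℝ) : EReal) * Na u E T b γ
      = ((∑ b : A, π.Q γ * π.q γ b * r γ b : ℝ) : EReal) := by
    intro γ hγ
    rw [coe_sum]
    refine Finset.sum_congr rfl fun b _ => ?_
    simp only [hr_def]
    by_cases hmem : γ ∈ π.supp
    · exact term_repr (mul_nonneg (π.Q_nonneg γ) ((π.q_mem γ hmem).1 b))
        (Na_ne_top hEtop hT0 b γ) (fun hc => hfin γ hmem b hc)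
    · rw [hQoff γ hmem]
      simp
  have hrep_new : ∀ γ ∈ U, ∑ b : A, ((Q' γ * q' γ b : ℝ) : EReal) * Na u E T b γ
      = ((∑ b : A, Q' γ * q' γ b * r γ b : ℝ) : EReal) := by
    intro γ hγ
    rw [coe_sum]
    refine Finset.sum_congr rfl fun b _ => ?_
    simp only [hr_def]
    exact term_repr (mul_nonneg (hQ'nonneg γ) (hq'nonneg γ hγ b))
      (Na_ne_top hEtop hT0 b γ) (hfin' γ hγ b)
  have hold : objective u E T π
      = ((∑ γ ∈ U, ∑ b : A, π.Q γ * π.q γ b * r γ b : ℝ) : EReal) := by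
    have e1 : objective u E T π
        = ∑ γ ∈ U, ∑ b : A, ((π.Q γ * π.q γ b : ℝ) : EReal) * Na u E T b γ := by
      unfold objective
      rw [hU_def]
      refine (Finset.sum_insert_of_eq_zero_if_notMem
        (f := fun γ => ∑ b : A, ((π.Q γ * π.q γ b : ℝ) : EReal) * Na u E T b γ)
        (fun hns => ?_)).symm
      exact Finset.sum_eq_zero fun b _ => by
        simp only [hQoff γs hns, zero_mul, EReal.coe_zero]
    rw [e1, coe_sum]
    exact Finset.sum_congr rfl hrep_old
  have hnew : objective u E T π'
      = ((∑ γ ∈ U, ∑ b : A, Q' γ * q' γ b * r γ b : ℝ) : EReal) := by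
    have e1 : objective u E T π'
        = ∑ γ ∈ U, ∑ b : A, ((Q' γ * q' γ b : ℝ) : EReal) * Na u E T b γ := by
      rw [hπ'_def]
      unfold objective
      refine Finset.sum_subset hsubU (fun γ hγU hγn => ?_)
      have hq0 : Q' γ = 0 := by
        by_contra h0
        exact hγn ((hsupp'iff γ).2 h0)
      exact Finset.sum_eq_zero fun b _ => by simp only [hq0, zero_mul, EReal.coe_zero]
    rw [e1, coe_sum]
    exact Finset.sum_congr rfl hrep_new
  have hre : ∑ γ ∈ U, (∑ b : A, Q' γ * q' γ b * r γ b)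
      - ∑ γ ∈ U, (∑ b : A, π.Q γ * π.q γ b * r γ b)
      = M * r γs a - π.Q γ1 * r γ1 a - π.Q γ2 * s * r γ2 a := by
    rw [hsum_diff (fun γ => ∑ b : A, Q' γ * q' γ b * r γ b)
      (fun γ => ∑ b : A, π.Q γ * π.q γ b * r γ b)
      (fun γ ha hb hc => Finset.sum_congr rfl fun b _ => by
        simp only [hQ'o γ ha hb hc, hq'o γ hc hb])]
    try dsimp only
    have hF1 : ∑ b : A, Q' γ1 * q' γ1 b * r γ1 b = 0 :=
      Finset.sum_eq_zero fun b _ => by simp only [hQ'1, zero_mul]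
    have hG1 : ∑ b : A, π.Q γ1 * π.q γ1 b * r γ1 b = π.Q γ1 * r γ1 a := by
      rw [Finset.sum_eq_single a (fun b _ hb => by simp only [hq1b b hb, mul_zero, zero_mul])
        (fun h => absurd (Finset.mem_univ a) h)]
      simp only [hq1, mul_one]
    have hFG2 : ∀ b, b ≠ a → Q' γ2 * q' γ2 b * r γ2 b = π.Q γ2 * π.q γ2 b * r γ2 b := by
      intro b hba
      rw [hQ'2, hq'2 b, if_neg hba]
      by_cases hs1' : s = 1
      · have hqb : π.q γ2 b = 0 := delta_of_one (π.q_mem γ2 h2) (hs_def.symm.trans hs1') hba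
        rw [hqb]
        simp
      · have h1s : (1 : ℝ) - s ≠ 0 := sub_ne_zero.2 (Ne.symm hs1')
        field_simp
    have hF2 : ∑ b : A, Q' γ2 * q' γ2 b * r γ2 b
        = ∑ b ∈ Finset.univ.erase a, π.Q γ2 * π.q γ2 b * r γ2 b := by
      rw [← Finset.add_sum_erase Finset.univ (fun b => Q' γ2 * q' γ2 b * r γ2 b)
        (Finset.mem_univ a)]
      try dsimp only
      rw [hq'2 a, if_pos rfl, mul_zero, zero_mul, zero_add]
      exact Finset.sum_congr rfl fun b hb => hFG2 b (Finset.ne_of_mem_erase hb)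
    have hG2 : ∑ b : A, π.Q γ2 * π.q γ2 b * r γ2 b
        = π.Q γ2 * s * r γ2 a + ∑ b ∈ Finset.univ.erase a, π.Q γ2 * π.q γ2 b * r γ2 b := by
      rw [← Finset.add_sum_erase Finset.univ (fun b => π.Q γ2 * π.q γ2 b * r γ2 b)
        (Finset.mem_univ a)]
      try dsimp only
      try rw [hs_def]
    have hFGs : ∑ b : A, Q' γs * q' γs b * r γs b
        - ∑ b : A, π.Q γs * π.q γs b * r γs b = M * r γs a := by
      rw [← Finset.sum_sub_distrib]
      have e : ∀ b : A, Q' γs * q' γs b * r γs b - π.Q γs * π.q γs b * r γs b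
          = if b = a then M * r γs b else 0 := by
        intro b
        rw [hQ's, hq's b, mul_comm (π.Q γs + M), div_mul_cancel₀ _ hD.ne']
        split_ifs with h
        · ring
        · ring
      rw [Finset.sum_congr rfl (fun b _ => e b)]
      simp
    linarith [hF1, hG1, hF2, hG2, hFGs]
  have hlt : (∑ γ ∈ U, ∑ b : A, π.Q γ * π.q γ b * r γ b)
      < ∑ γ ∈ U, ∑ b : A, Q' γ * q' γ b * r γ b := by linarith [hre, hkey]
  rw [hold, hnew]
  exact_mod_cast hlt

end Stmt3Aux

open Stmt3Aux

/-- Corollary 2. Under Assumption 1, for fixed `(E, T)`, if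
`(Q̂, q̂)` solves the rational-inattention problem and `a` is chosen with
probability 1 at the supported posterior `γ^a`, then `P(a) > 0` and the
optimal posterior is recovered by Bayes' rule:
`γ^a(ω) = P(a|ω) μ(ω) / P(a)` for every state `ω`. -/
theorem statement3 (μ : Ω → ℝ) (hμ : μ ∈ stdSimplex ℝ Ω) (hμpos : ∀ ω, 0 < μ ω)
    (u : A → Ω → ℝ) (E : A → EReal) (T : (Ω → ℝ) → EReal)
    (hA : Assumption1 μ u E T)
    (πhat : Policy Ω A μ) (hmax : RIMax u E T πhat)
    (a : A) (γa : Ω → ℝ) (hγa : γa ∈ πhat.supp) (hq : πhat.q γa a = 1) :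
    0 < genProb μ πhat a ∧
    ∀ ω, γa ω = genP μ πhat a ω * μ ω / genProb μ πhat a := by
  classical
  obtain ⟨hEtop, ⟨a0, ha0⟩, hT0, hTμ, hconv, hLI, hud⟩ := hA
  -- the trivial "no information, choose a0" policy has finite value
  set π0 : Policy Ω A μ :=
    { supp := {μ}
      Q := fun γ => if γ = μ then 1 else 0
      Q_nonneg := fun γ => by split_ifs <;> norm_num
      supp_iff := fun γ => by
        constructor
        · intro h
          rw [Finset.mem_singleton] at h
          simp [h]
        · intro h
          rw [Finset.mem_singleton]
          by_contra hn
          simp [hn] at h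
      mem_simplex := fun γ hγ => by
        rw [Finset.mem_singleton] at hγ
        rw [hγ]; exact hμ
      Q_total := by simp
      bayes := fun ω => by simp
      q := fun _ b => if b = a0 then 1 else 0
      q_mem := fun γ _ => ⟨fun b => by dsimp only; split_ifs <;> norm_num, by simp⟩ } with hπ0
  have hobj0 : objective u E T π0 ≠ ⊥ := by
    have e1 : objective u E T π0 = Na u E T a0 μ := by
      show (∑ γ ∈ ({μ} : Finset (Ω → ℝ)), ∑ b : A,
        (((if γ = μ then (1 : ℝ) else 0) * (if b = a0 then (1 : ℝ) else 0) : ℝ) : EReal)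
          * Na u E T b γ) = _
      rw [Finset.sum_singleton]
      rw [Finset.sum_eq_single a0 (fun b _ hb => by simp [hb])
        (fun h => absurd (Finset.mem_univ a0) h)]
      simp
    rw [e1]
    have hE0 : E a0 = ((E a0).toReal : EReal) := (EReal.coe_toReal (hEtop a0) ha0).symm
    unfold Na
    rw [hE0, hTμ, sub_zero, ← EReal.coe_add]
    exact EReal.coe_ne_bot _
  have hbot : objective u E T πhat ≠ ⊥ := by
    intro h
    have hle := hmax π0
    rw [h, le_bot_iff] at hle
    exact hobj0 hle
  have hz : ∀ γ ∈ πhat.supp, γ ≠ γa → πhat.q γ a = 0 := by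
    intro γ hγ hne
    by_contra hq0
    obtain ⟨π', hπ'⟩ := improve u E T hEtop hT0 hconv πhat hbot a γa γ hγa hγ
      (fun hh => hne hh.symm) hq hq0
    exact absurd (hmax π') (not_le.2 hπ')
  have hQa : 0 < πhat.Q γa :=
    lt_of_le_of_ne (πhat.Q_nonneg γa) (Ne.symm ((πhat.supp_iff γa).1 hγa))
  have hProb : genProb μ πhat a = πhat.Q γa := by
    unfold genProb
    rw [Finset.sum_eq_single γa (fun γ hγ hne => by simp [hz γ hγ hne])
      (fun h => absurd hγa h)]
    simp only [hq, mul_one]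
  refine ⟨by rw [hProb]; exact hQa, fun ω => ?_⟩
  have hsum : ∑ γ ∈ πhat.supp, πhat.Q γ * πhat.q γ a * γ ω = πhat.Q γa * γa ω := by
    rw [Finset.sum_eq_single γa (fun γ hγ hne => by simp [hz γ hγ hne])
      (fun h => absurd hγa h)]
    simp only [hq, mul_one]
  rw [hProb]
  show γa ω = (μ ω)⁻¹ * (∑ γ ∈ πhat.supp, πhat.Q γ * πhat.q γ a * γ ω) * μ ω / πhat.Q γa
  rw [hsum]
  have hμω := (hμpos ω).ne'
  field_simp
  try ring
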